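/- (Correctness of reduction R1.) Let G be a finite simple graph with cardinality function c and let v be an isolated vertex of G (a vertex of degree 0). Then c(G) = (c0(v) + c1(v)) * c(G - v), where G - v denotes the induced subgraph on V(G) \ {v} with the weights of c restricted to its vertices and edges. -/

import Mathlib

open Finset

noncomputable section
open scoped Classical

variable {V : Type*}

/-- `S` is an independent set of the simple graph `G`. -/
def Indep (G : SimpleGraph V) (S : Finset V) : Prop :=
  ∀ u ∈ S, ∀ w ∈ S, ¬ G.Adj u w

/-- Independent sets of the induced subgraph `G[W]`. -/
def indepOn [Fintype V] (G : SimpleGraph V) (W : Finset V) : Finset (Finset V) :=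
  univ.filter fun S => S ⊆ W ∧ Indep G S

/-- Weight `c_{G[W]}(S)` of an independent set `S` of `G[W]` with respect to the
cardinality function given by vertex weights `c1, c0` and edge weights `ce`. -/
def wt [Fintype V] (G : SimpleGraph V) (c1 c0 : V → ℚ) (ce : Sym2 V → ℚ)
    (W S : Finset V) : ℚ :=
  (∏ v ∈ S, c1 v) * (∏ v ∈ W \ S, c0 v) *
    ∏ e ∈ G.edgeFinset.filter (fun e => (∀ x ∈ e, x ∈ W) ∧ ∀ x ∈ e, x ∉ S), ce e

/-- `c(G[W])`: the weighted sum over all independent sets of `G[W]`. -/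
def tot [Fintype V] (G : SimpleGraph V) (c1 c0 : V → ℚ) (ce : Sym2 V → ℚ)
    (W : Finset V) : ℚ :=
  ∑ S ∈ indepOn G W, wt G c1 c0 ce W S

/-- `c(G[W], v^η)`: the weighted sum over independent sets `S` of `G[W]` with
`v ∈ S` iff `η = 1`. -/
def totC [Fintype V] (G : SimpleGraph V) (c1 c0 : V → ℚ) (ce : Sym2 V → ℚ)
    (W : Finset V) (v : V) (η : Bool) : ℚ :=
  ∑ S ∈ (indepOn G W).filter (fun S => v ∈ S ↔ η = true), wt G c1 c0 ce W S

/-- `c(G[W], u^ζ, v^η)`. -/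
def totC2 [Fintype V] (G : SimpleGraph V) (c1 c0 : V → ℚ) (ce : Sym2 V → ℚ)
    (W : Finset V) (u v : V) (ζ η : Bool) : ℚ :=
  ∑ S ∈ (indepOn G W).filter (fun S => (u ∈ S ↔ ζ = true) ∧ (v ∈ S ↔ η = true)),
    wt G c1 c0 ce W S


/-- Correctness of reduction R1: if `v` is an isolated vertex of `G`,
then `c(G) = (c0(v) + c1(v)) * c(G - v)`. -/
theorem tot_isolated [Fintype V] (G : SimpleGraph V)
    (c1 c0 : V → ℚ) (ce : Sym2 V → ℚ) (v : V) (hv : ∀ u, ¬ G.Adj v u) :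
    tot G c1 c0 ce univ = (c0 v + c1 v) * tot G c1 c0 ce ({v} : Finset V)ᶜ := by
  have hve : ∀ e ∈ G.edgeFinset, v ∉ e := by
    intro e he
    induction e using Sym2.ind with
    | _ a b =>
      rw [SimpleGraph.mem_edgeFinset, SimpleGraph.mem_edgeSet] at he
      rw [Sym2.mem_iff]
      rintro (rfl | rfl)
      · exact hv b he
      · exact hv a (G.adj_symm he)
  have hedge : ∀ S : Finset V, v ∉ S →
      G.edgeFinset.filter (fun e => (∀ x ∈ e, x ∈ (univ : Finset V)) ∧ ∀ x ∈ e, x ∉ S)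
      = G.edgeFinset.filter
        (fun e => (∀ x ∈ e, x ∈ ({v} : Finset V)ᶜ) ∧ ∀ x ∈ e, x ∉ S) := by
    intro S hvS
    apply Finset.filter_congr
    intro e he
    simp only [Finset.mem_univ, true_and, Finset.mem_compl, Finset.mem_singleton]
    refine ⟨fun h => ⟨fun x hx hxv => hve e he (hxv ▸ hx), h.2⟩, fun h => ⟨fun _ _ => trivial, h.2⟩⟩
  have hedge' : ∀ S : Finset V,
      G.edgeFinset.filter (fun e => (∀ x ∈ e, x ∈ (univ : Finset V)) ∧ ∀ x ∈ e, x ∉ insert v S)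
      = G.edgeFinset.filter
        (fun e => (∀ x ∈ e, x ∈ ({v} : Finset V)ᶜ) ∧ ∀ x ∈ e, x ∉ S) := by
    intro S
    apply Finset.filter_congr
    intro e he
    simp only [Finset.mem_univ, true_and, Finset.mem_compl, Finset.mem_singleton,
      Finset.mem_insert, not_or]
    refine ⟨fun h => ⟨fun x hx hxv => hve e he (hxv ▸ hx), fun x hx => (h.2 x hx).2⟩,
      fun h => ⟨fun _ _ => trivial, fun x hx => ⟨fun hxv => h.1 x hx hxv, h.2 x hx⟩⟩⟩
  -- weights
  have hwt0 : ∀ S : Finset V, v ∉ S →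
      wt G c1 c0 ce univ S = c0 v * wt G c1 c0 ce ({v} : Finset V)ᶜ S := by
    intro S hvS
    unfold wt
    rw [hedge S hvS]
    have h1 : (univ : Finset V) \ S = insert v (({v} : Finset V)ᶜ \ S) := by
      ext x
      simp only [Finset.mem_sdiff, Finset.mem_univ, true_and, Finset.mem_insert,
        Finset.mem_compl, Finset.mem_singleton]
      constructor
      · intro hx
        by_cases hxv : x = v
        · exact Or.inl hxv
        · exact Or.inr ⟨hxv, hx⟩
      · rintro (rfl | ⟨_, hx⟩)
        · exact hvS
        · exact hx
    rw [h1, Finset.prod_insert (by simp [hvS])]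
    ring
  have hwt1 : ∀ S : Finset V, v ∉ S →
      wt G c1 c0 ce univ (insert v S) = c1 v * wt G c1 c0 ce ({v} : Finset V)ᶜ S := by
    intro S hvS
    unfold wt
    rw [hedge' S]
    have h1 : (univ : Finset V) \ insert v S = ({v} : Finset V)ᶜ \ S := by
      ext x
      simp only [Finset.mem_sdiff, Finset.mem_univ, true_and, Finset.mem_insert,
        Finset.mem_compl, Finset.mem_singleton, not_or]
    rw [h1, Finset.prod_insert hvS]
    ring
  -- split the sum
  unfold tot
  rw [← Finset.sum_filter_add_sum_filter_not (indepOn G univ) (fun S => v ∈ S)]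
  have hset0 : (indepOn G univ).filter (fun S => ¬ v ∈ S) = indepOn G ({v} : Finset V)ᶜ := by
    ext S
    simp only [Finset.mem_filter, indepOn, Finset.mem_univ, true_and]
    constructor
    · rintro ⟨⟨_, hind⟩, hvS⟩
      refine ⟨fun x hx => ?_, hind⟩
      simp only [Finset.mem_compl, Finset.mem_singleton]
      rintro rfl; exact hvS hx
    · rintro ⟨hsub, hind⟩
      refine ⟨⟨Finset.subset_univ S, hind⟩, fun hvS => ?_⟩
      have := hsub hvS
      simp at this
  have h0 : ∑ S ∈ (indepOn G univ).filter (fun S => ¬ v ∈ S), wt G c1 c0 ce univ S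
      = c0 v * tot G c1 c0 ce ({v} : Finset V)ᶜ := by
    rw [hset0]
    unfold tot
    rw [Finset.mul_sum]
    apply Finset.sum_congr rfl
    intro S hS
    apply hwt0
    simp only [indepOn, Finset.mem_filter] at hS
    intro hvS
    have := hS.2.1 hvS
    simp at this
  have h1 : ∑ S ∈ (indepOn G univ).filter (fun S => v ∈ S), wt G c1 c0 ce univ S
      = c1 v * tot G c1 c0 ce ({v} : Finset V)ᶜ := by
    unfold tot
    rw [Finset.mul_sum]
    refine Finset.sum_nbij' (fun S => S.erase v) (fun S => insert v S) ?_ ?_ ?_ ?_ ?_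
    · intro S hS
      simp only [Finset.mem_filter, indepOn, Finset.mem_univ, true_and] at hS ⊢
      obtain ⟨⟨_, hind⟩, hvS⟩ := hS
      refine ⟨fun x hx => ?_, fun a ha b hb => hind a (Finset.mem_of_mem_erase ha) b
        (Finset.mem_of_mem_erase hb)⟩
      simp only [Finset.mem_compl, Finset.mem_singleton]
      exact (Finset.mem_erase.mp hx).1
    · intro S hS
      simp only [Finset.mem_filter, indepOn, Finset.mem_univ, true_and] at hS ⊢
      obtain ⟨hsub, hind⟩ := hS
      refine ⟨⟨Finset.subset_univ _, ?_⟩, Finset.mem_insert_self v S⟩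
      intro a ha b hb
      rcases Finset.mem_insert.mp ha with rfl | ha
      · exact hv b
      rcases Finset.mem_insert.mp hb with rfl | hb
      · intro h; exact hv a (G.adj_symm h)
      exact hind a ha b hb
    · intro S hS
      simp only [Finset.mem_filter] at hS
      exact Finset.insert_erase hS.2
    · intro S hS
      simp only [Finset.mem_filter, indepOn, Finset.mem_univ, true_and] at hS
      apply Finset.erase_insert
      intro hvS
      have := hS.1 hvS
      simp at this
    · intro S hS
      simp only [Finset.mem_filter] at hS
      have hvS : v ∉ S.erase v := Finset.notMem_erase v S
      rw [← hwt1 _ hvS, Finset.insert_erase hS.2]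
  rw [h0, h1]
  unfold tot
  ring
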